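/- Let Ω ⊂ ℝ^m be a bounded domain, F a C¹ vector field on the closure of Ω, and a > 0. Suppose v, w ∈ C²(closure of Ω) both satisfy div N_a(·) = 0 in Ω, where N_a(ρ) := (∇ρ + F)/√(a² + |∇ρ + F|²). Then for any subdomain Ω′ with compact closure in Ω (with boundary regular enough for the divergence theorem), | ∫_{Ω′} ( √(a² + |∇v + F|²) − √(a² + |∇w + F|²) ) d^m x | ≤ ∫_{∂Ω′} |v − w| dσ, where dσ is the boundary (surface) measure. -/

import Mathlib

open MeasureTheory Filter Set Topology Bornology
open scoped ENNReal NNReal InnerProductSpace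

noncomputable section

/-- The (Euclidean) divergence of a vector field on `ℝ^m`. -/
def divg {m : ℕ} (φ : EuclideanSpace ℝ (Fin m) → EuclideanSpace ℝ (Fin m))
    (x : EuclideanSpace ℝ (Fin m)) : ℝ :=
  ∑ i, fderiv ℝ φ x (EuclideanSpace.single i 1) i

/-- The total variation `∫_Ω |Du + F d^m x|` of `u ∈ L¹(Ω)`, defined by duality:
`sup { ∫_Ω (−u div φ⃗ + F·φ⃗) : φ⃗ ∈ C¹_0(Ω), |φ⃗| ≤ 1 }`. -/
def tvF {m : ℕ} (Ω : Set (EuclideanSpace ℝ (Fin m)))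
    (F : EuclideanSpace ℝ (Fin m) → EuclideanSpace ℝ (Fin m))
    (u : EuclideanSpace ℝ (Fin m) → ℝ) : ℝ≥0∞ :=
  ⨆ (φ : EuclideanSpace ℝ (Fin m) → EuclideanSpace ℝ (Fin m)) (_ : ContDiff ℝ 1 φ)
    (_ : HasCompactSupport φ) (_ : tsupport φ ⊆ Ω) (_ : ∀ x, ‖φ x‖ ≤ 1),
    ENNReal.ofReal (∫ x in Ω, (-(u x) * divg φ x + ⟪F x, φ x⟫_ℝ))

lemma eucl_decomp {m : ℕ} (y : EuclideanSpace ℝ (Fin m)) :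
    y = ∑ i, y i • EuclideanSpace.single i 1 := by
  ext j
  rw [WithLp.ofLp_sum, Finset.sum_apply]
  simp [EuclideanSpace.single_apply, PiLp.smul_apply]

lemma divg_smul {m : ℕ} (f : EuclideanSpace ℝ (Fin m) → ℝ)
    (φ : EuclideanSpace ℝ (Fin m) → EuclideanSpace ℝ (Fin m))
    (x : EuclideanSpace ℝ (Fin m)) (hf : DifferentiableAt ℝ f x)
    (hφ : DifferentiableAt ℝ φ x) :
    divg (fun y => f y • φ y) x = fderiv ℝ f x (φ x) + f x * divg φ x := by
  unfold divg
  rw [fderiv_fun_smul hf hφ]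
  have h1 : ∀ i : Fin m,
      ((f x • fderiv ℝ φ x + (fderiv ℝ f x).smulRight (φ x)) (EuclideanSpace.single i 1)) i
      = f x * (fderiv ℝ φ x (EuclideanSpace.single i 1)) i
        + fderiv ℝ f x (EuclideanSpace.single i 1) * φ x i := by
    intro i
    simp [ContinuousLinearMap.smulRight_apply]
  rw [Finset.sum_congr rfl (fun i _ => h1 i), Finset.sum_add_distrib, ← Finset.mul_sum]
  have h2 : fderiv ℝ f x (φ x) = ∑ i, fderiv ℝ f x (EuclideanSpace.single i 1) * φ x i := by
    conv_lhs => rw [eucl_decomp (φ x)]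
    rw [map_sum]
    simp [mul_comm]
  rw [h2]
  ring

lemma key_ineq {m : ℕ} (a : ℝ) (ha : 0 < a) (p q : EuclideanSpace ℝ (Fin m)) :
    Real.sqrt (a ^ 2 + ‖p‖ ^ 2) - Real.sqrt (a ^ 2 + ‖q‖ ^ 2) ≤
      (Real.sqrt (a ^ 2 + ‖p‖ ^ 2))⁻¹ * ⟪p - q, p⟫_ℝ := by
  set P := Real.sqrt (a ^ 2 + ‖p‖ ^ 2) with hPdef
  set Q := Real.sqrt (a ^ 2 + ‖q‖ ^ 2) with hQdef
  have hP : 0 < P := Real.sqrt_pos.2 (by positivity)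
  have hQ : 0 < Q := Real.sqrt_pos.2 (by positivity)
  have hP2 : P ^ 2 = a ^ 2 + ‖p‖ ^ 2 := Real.sq_sqrt (by positivity)
  have hQ2 : Q ^ 2 = a ^ 2 + ‖q‖ ^ 2 := Real.sq_sqrt (by positivity)
  have hs : ⟪q, p⟫_ℝ ≤ ‖q‖ * ‖p‖ := real_inner_le_norm q p
  have h1 : (a ^ 2 + ‖q‖ * ‖p‖) ^ 2 ≤ (P * Q) ^ 2 := by
    nlinarith [sq_nonneg (‖p‖ - ‖q‖), sq_nonneg a]
  have h2 : a ^ 2 + ‖q‖ * ‖p‖ ≤ P * Q := by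
    have hn : 0 ≤ a ^ 2 + ‖q‖ * ‖p‖ := by positivity
    nlinarith [mul_pos hP hQ]
  have hinner : ⟪p - q, p⟫_ℝ = ‖p‖ ^ 2 - ⟪q, p⟫_ℝ := by
    rw [inner_sub_left, real_inner_self_eq_norm_sq]
  rw [hinner, inv_mul_eq_div, le_div_iff₀ hP]
  nlinarith

/-- The vector field `∇u + F`. -/
def Xf {m : ℕ} (F : EuclideanSpace ℝ (Fin m) → EuclideanSpace ℝ (Fin m))
    (u : EuclideanSpace ℝ (Fin m) → ℝ) : EuclideanSpace ℝ (Fin m) → EuclideanSpace ℝ (Fin m) :=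
  fun x => gradient u x + F x

/-- The regularized area integrand. -/
def qf {m : ℕ} (a : ℝ) (F : EuclideanSpace ℝ (Fin m) → EuclideanSpace ℝ (Fin m))
    (u : EuclideanSpace ℝ (Fin m) → ℝ) : EuclideanSpace ℝ (Fin m) → ℝ :=
  fun x => Real.sqrt (a ^ 2 + ‖Xf F u x‖ ^ 2)

/-- The normalized vector field. -/
def Nf {m : ℕ} (a : ℝ) (F : EuclideanSpace ℝ (Fin m) → EuclideanSpace ℝ (Fin m))
    (u : EuclideanSpace ℝ (Fin m) → ℝ) : EuclideanSpace ℝ (Fin m) → EuclideanSpace ℝ (Fin m) :=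
  fun x => (qf a F u x)⁻¹ • Xf F u x

section facts
variable {m : ℕ} {F : EuclideanSpace ℝ (Fin m) → EuclideanSpace ℝ (Fin m)}
  {u : EuclideanSpace ℝ (Fin m) → ℝ} {a : ℝ}

lemma qf_pos (ha : 0 < a) (x : EuclideanSpace ℝ (Fin m)) : 0 < qf a F u x :=
  Real.sqrt_pos.2 (by positivity)

lemma Nf_norm_le (ha : 0 < a) (x : EuclideanSpace ℝ (Fin m)) : ‖Nf a F u x‖ ≤ 1 := by
  have hq := qf_pos (F := F) (u := u) ha x
  have hle : ‖Xf F u x‖ ≤ qf a F u x := by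
    rw [show ‖Xf F u x‖ = Real.sqrt (‖Xf F u x‖ ^ 2) from (Real.sqrt_sq (norm_nonneg _)).symm]
    exact Real.sqrt_le_sqrt (by nlinarith)
  rw [Nf, norm_smul, norm_inv, Real.norm_eq_abs, abs_of_pos hq]
  rw [inv_mul_le_iff₀ hq, mul_one]
  exact hle

variable {Ω : Set (EuclideanSpace ℝ (Fin m))}

lemma contDiffOn_Xf (hopen : IsOpen Ω) (hF : ContDiffOn ℝ 1 F Ω)
    (hu : ContDiffOn ℝ 2 u Ω) : ContDiffOn ℝ 1 (Xf F u) Ω := by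
  have hfd : ContDiffOn ℝ 1 (fderiv ℝ u) Ω := hu.fderiv_of_isOpen hopen (by norm_num)
  have hgrad : ContDiffOn ℝ 1 (gradient u) Ω := by
    show ContDiffOn ℝ 1
      (fun x => (InnerProductSpace.toDual ℝ (EuclideanSpace ℝ (Fin m))).symm (fderiv ℝ u x)) Ω
    exact (InnerProductSpace.toDual ℝ
      (EuclideanSpace ℝ (Fin m))).symm.contDiff.comp_contDiffOn hfd
  exact hgrad.add hF

lemma contDiffOn_qf (ha : 0 < a) (hopen : IsOpen Ω) (hF : ContDiffOn ℝ 1 F Ω)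
    (hu : ContDiffOn ℝ 2 u Ω) : ContDiffOn ℝ 1 (qf a F u) Ω := by
  have hX := contDiffOn_Xf hopen hF hu
  have h1 : ContDiffOn ℝ 1 (fun x => a ^ 2 + ⟪Xf F u x, Xf F u x⟫_ℝ) Ω :=
    contDiffOn_const.add (ContDiffOn.inner ℝ hX hX)
  have h2 : ContDiffOn ℝ 1 (fun x => Real.sqrt (a ^ 2 + ⟪Xf F u x, Xf F u x⟫_ℝ)) Ω :=
    h1.sqrt (fun x _ => by rw [real_inner_self_eq_norm_sq]; positivity)
  have : qf a F u = fun x => Real.sqrt (a ^ 2 + ⟪Xf F u x, Xf F u x⟫_ℝ) := by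
    funext x; rw [qf, real_inner_self_eq_norm_sq]
  rw [this]
  exact h2

lemma contDiffOn_Nf (ha : 0 < a) (hopen : IsOpen Ω) (hF : ContDiffOn ℝ 1 F Ω)
    (hu : ContDiffOn ℝ 2 u Ω) : ContDiffOn ℝ 1 (Nf a F u) Ω :=
  ((contDiffOn_qf ha hopen hF hu).inv (fun x _ => (qf_pos ha x).ne')).smul
    (contDiffOn_Xf hopen hF hu)

end facts

lemma one_side
    {m : ℕ} (Ω : Set (EuclideanSpace ℝ (Fin m))) (hopen : IsOpen Ω)
    (F : EuclideanSpace ℝ (Fin m) → EuclideanSpace ℝ (Fin m))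
    (hF : ContDiffOn ℝ 1 F (closure Ω))
    (a : ℝ) (ha : 0 < a)
    (v w : EuclideanSpace ℝ (Fin m) → ℝ)
    (hv : ContDiffOn ℝ 2 v (closure Ω)) (hw : ContDiffOn ℝ 2 w (closure Ω))
    (hveq : ∀ x ∈ Ω, divg (Nf a F v) x = 0)
    (Ω' : Set (EuclideanSpace ℝ (Fin m)))
    (hΩ'open : IsOpen Ω') (hΩ'sub : closure Ω' ⊆ Ω) (hΩ'cpt : IsCompact (closure Ω'))
    (hσfin : μH[(m : ℝ) - 1] (frontier Ω') ≠ ⊤)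
    (nrm : EuclideanSpace ℝ (Fin m) → EuclideanSpace ℝ (Fin m))
    (hnrm : ∀ x ∈ frontier Ω', ‖nrm x‖ = 1)
    (hdiv : ∀ G : EuclideanSpace ℝ (Fin m) → EuclideanSpace ℝ (Fin m),
        ContDiffOn ℝ 1 G (closure Ω') →
        ∫ x in Ω', divg G x =
          ∫ x in frontier Ω', ⟪G x, nrm x⟫_ℝ ∂(μH[(m : ℝ) - 1])) :
    ∫ x in Ω', (qf a F v x - qf a F w x) ≤
      ∫ x in frontier Ω', |v x - w x| ∂(μH[(m : ℝ) - 1]) := by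
  have hsub1 : Ω ⊆ closure Ω := subset_closure
  have hF1 : ContDiffOn ℝ 1 F Ω := hF.mono hsub1
  have hv2 : ContDiffOn ℝ 2 v Ω := hv.mono hsub1
  have hw2 : ContDiffOn ℝ 2 w Ω := hw.mono hsub1
  have hfr : frontier Ω' ⊆ closure Ω' := frontier_subset_closure
  -- regularity
  have hXv : ContDiffOn ℝ 1 (Xf F v) Ω := contDiffOn_Xf hopen hF1 hv2
  have hXw : ContDiffOn ℝ 1 (Xf F w) Ω := contDiffOn_Xf hopen hF1 hw2
  have hqv : ContDiffOn ℝ 1 (qf a F v) Ω := contDiffOn_qf ha hopen hF1 hv2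
  have hqw : ContDiffOn ℝ 1 (qf a F w) Ω := contDiffOn_qf ha hopen hF1 hw2
  have hNv : ContDiffOn ℝ 1 (Nf a F v) Ω := contDiffOn_Nf ha hopen hF1 hv2
  have hvw : ContDiffOn ℝ 1 (fun x => v x - w x) Ω :=
    (hv2.sub hw2).of_le (by norm_num)
  -- the test field for the divergence theorem
  set G : EuclideanSpace ℝ (Fin m) → EuclideanSpace ℝ (Fin m) :=
    fun x => (v x - w x) • Nf a F v x with hGdef
  have hG : ContDiffOn ℝ 1 G (closure Ω') := ((hvw.smul hNv).mono hΩ'sub)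
  -- pointwise identity for divg G on Ω
  have hdivG : ∀ x ∈ Ω, divg G x = ⟪Xf F v x - Xf F w x, Nf a F v x⟫_ℝ := by
    intro x hx
    have hnb : Ω ∈ nhds x := hopen.mem_nhds hx
    have hdv : DifferentiableAt ℝ v x :=
      (hv2.contDiffAt hnb).differentiableAt (by norm_num)
    have hdw : DifferentiableAt ℝ w x :=
      (hw2.contDiffAt hnb).differentiableAt (by norm_num)
    have hdN : DifferentiableAt ℝ (Nf a F v) x :=
      (hNv.contDiffAt hnb).differentiableAt one_ne_zero
    rw [hGdef, divg_smul (fun y => v y - w y) _ x (hdv.sub hdw) hdN, hveq x hx, mul_zero, add_zero]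
    have hfd : fderiv ℝ (fun y => v y - w y) x = fderiv ℝ v x - fderiv ℝ w x :=
      fderiv_sub hdv hdw
    have hgrad : ∀ (f : EuclideanSpace ℝ (Fin m) → ℝ) (y : EuclideanSpace ℝ (Fin m)),
        ⟪gradient f x, y⟫_ℝ = fderiv ℝ f x y := fun f y =>
      InnerProductSpace.toDual_symm_apply
    rw [hfd]
    rw [inner_sub_left]
    rw [ContinuousLinearMap.sub_apply, ← hgrad v, ← hgrad w]
    simp only [Xf, inner_add_left]
    ring
  -- pointwise inequality on Ω
  have hptwise : ∀ x ∈ Ω, qf a F v x - qf a F w x ≤ divg G x := by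
    intro x hx
    rw [hdivG x hx, Nf, real_inner_smul_right]
    exact key_ineq a ha (Xf F v x) (Xf F w x)
  -- integrability on Ω'
  have hmeas : MeasurableSet Ω' := hΩ'open.measurableSet
  have hcont1 : ContinuousOn (fun x => qf a F v x - qf a F w x) (closure Ω') :=
    ((hqv.continuousOn.sub hqw.continuousOn).mono hΩ'sub)
  have hint1 : IntegrableOn (fun x => qf a F v x - qf a F w x) Ω' :=
    (hcont1.integrableOn_compact hΩ'cpt).mono_set subset_closure
  have hcont2 : ContinuousOn (fun x => ⟪Xf F v x - Xf F w x, Nf a F v x⟫_ℝ) (closure Ω') :=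
    (((hXv.continuousOn.sub hXw.continuousOn).inner hNv.continuousOn).mono hΩ'sub)
  have hint2 : IntegrableOn (fun x => ⟪Xf F v x - Xf F w x, Nf a F v x⟫_ℝ) Ω' :=
    (hcont2.integrableOn_compact hΩ'cpt).mono_set subset_closure
  -- step 1 : interior comparison
  have step1 : ∫ x in Ω', (qf a F v x - qf a F w x) ≤
      ∫ x in Ω', ⟪Xf F v x - Xf F w x, Nf a F v x⟫_ℝ := by
    apply setIntegral_mono_on hint1 hint2 hmeas
    intro x hx
    have hxΩ : x ∈ Ω := hΩ'sub (subset_closure hx)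
    calc qf a F v x - qf a F w x ≤ divg G x := hptwise x hxΩ
      _ = _ := hdivG x hxΩ
  -- step 2 : divergence theorem
  have step2 : ∫ x in Ω', ⟪Xf F v x - Xf F w x, Nf a F v x⟫_ℝ =
      ∫ x in frontier Ω', ⟪G x, nrm x⟫_ℝ ∂(μH[(m : ℝ) - 1]) := by
    rw [← hdiv G hG]
    apply setIntegral_congr_fun hmeas
    intro x hx
    exact (hdivG x (hΩ'sub (subset_closure hx))).symm
  -- step 3 : boundary estimate
  have hfrmeas : MeasurableSet (frontier Ω') := isClosed_frontier.measurableSet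
  have hsubc : frontier Ω' ⊆ closure Ω := fun x hx => hsub1 (hΩ'sub (hfr hx))
  have hcontvw : ContinuousOn (fun x => |v x - w x|) (frontier Ω') :=
    ((hv.continuousOn.mono hsubc).sub (hw.continuousOn.mono hsubc)).abs
  obtain ⟨C, hC⟩ := hΩ'cpt.exists_bound_of_continuousOn
    (((hv.continuousOn.mono (hΩ'sub.trans hsub1)).sub
      (hw.continuousOn.mono (hΩ'sub.trans hsub1))).abs)
  have hintb : IntegrableOn (fun x => |v x - w x|) (frontier Ω') (μH[(m : ℝ) - 1]) := by
    refine ⟨hcontvw.aestronglyMeasurable hfrmeas, ?_⟩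
    refine HasFiniteIntegral.restrict_of_bounded (C := C) hσfin.lt_top ?_
    exact ae_restrict_of_forall_mem hfrmeas fun x hx => hC x (hfr hx)
  have step3 : ∫ x in frontier Ω', ⟪G x, nrm x⟫_ℝ ∂(μH[(m : ℝ) - 1]) ≤
      ∫ x in frontier Ω', |v x - w x| ∂(μH[(m : ℝ) - 1]) := by
    refine le_trans (le_abs_self _) ?_
    rw [← Real.norm_eq_abs]
    refine norm_integral_le_of_norm_le hintb ?_
    refine ae_restrict_of_forall_mem hfrmeas fun x hx => ?_
    have h1 : |⟪Nf a F v x, nrm x⟫_ℝ| ≤ 1 := by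
      calc |⟪Nf a F v x, nrm x⟫_ℝ| ≤ ‖Nf a F v x‖ * ‖nrm x‖ := abs_real_inner_le_norm _ _
        _ = ‖Nf a F v x‖ := by rw [hnrm x hx, mul_one]
        _ ≤ 1 := Nf_norm_le ha x
    have h2 : ⟪G x, nrm x⟫_ℝ = (v x - w x) * ⟪Nf a F v x, nrm x⟫_ℝ :=
      real_inner_smul_left _ _ _
    rw [h2, Real.norm_eq_abs, abs_mul]
    calc |v x - w x| * |⟪Nf a F v x, nrm x⟫_ℝ| ≤ |v x - w x| * 1 :=
        mul_le_mul_of_nonneg_left h1 (abs_nonneg _)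
      _ = |v x - w x| := mul_one _
  calc ∫ x in Ω', (qf a F v x - qf a F w x)
      ≤ ∫ x in Ω', ⟪Xf F v x - Xf F w x, Nf a F v x⟫_ℝ := step1
    _ = ∫ x in frontier Ω', ⟪G x, nrm x⟫_ℝ ∂(μH[(m : ℝ) - 1]) := step2
    _ ≤ _ := step3


/-- **Lemma 2.3: comparison of regularized area integrands via boundary values.**
Let `Ω ⊂ ℝ^m` be a bounded domain, `F` a `C¹` vector field on `closure Ω`, `a > 0`,
and let `v, w ∈ C²(closure Ω)` both satisfy `div N_a(·) = 0` in `Ω`, where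
`N_a(ρ) = (∇ρ + F)/√(a² + |∇ρ + F|²)`.  Then for every subdomain `Ω′ ⊂⊂ Ω` whose
boundary is regular enough for the divergence theorem (expressed by the existence of a
unit normal field for which the divergence theorem holds, with finite surface measure),
`|∫_{Ω′} (√(a² + |∇v + F|²) − √(a² + |∇w + F|²))| ≤ ∫_{∂Ω′} |v − w| dσ`,
`dσ` being the `(m−1)`-dimensional Hausdorff (surface) measure. -/
theorem comparison_of_regularized_areas
    {m : ℕ} (Ω : Set (EuclideanSpace ℝ (Fin m)))
    (hopen : IsOpen Ω) (hconn : IsConnected Ω) (hbdd : IsBounded Ω)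
    (F : EuclideanSpace ℝ (Fin m) → EuclideanSpace ℝ (Fin m))
    (hF : ContDiffOn ℝ 1 F (closure Ω))
    (a : ℝ) (ha : 0 < a)
    (v w : EuclideanSpace ℝ (Fin m) → ℝ)
    (hv : ContDiffOn ℝ 2 v (closure Ω)) (hw : ContDiffOn ℝ 2 w (closure Ω))
    (hveq : ∀ x ∈ Ω, divg
      (fun y => (Real.sqrt (a ^ 2 + ‖gradient v y + F y‖ ^ 2))⁻¹ • (gradient v y + F y)) x = 0)
    (hweq : ∀ x ∈ Ω, divg
      (fun y => (Real.sqrt (a ^ 2 + ‖gradient w y + F y‖ ^ 2))⁻¹ • (gradient w y + F y)) x = 0)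
    (Ω' : Set (EuclideanSpace ℝ (Fin m)))
    (hΩ'open : IsOpen Ω') (hΩ'sub : closure Ω' ⊆ Ω) (hΩ'cpt : IsCompact (closure Ω'))
    (hσfin : μH[(m : ℝ) - 1] (frontier Ω') ≠ ⊤)
    -- the divergence theorem holds on `Ω′`
    (hdivthm : ∃ nrm : EuclideanSpace ℝ (Fin m) → EuclideanSpace ℝ (Fin m),
      (∀ x ∈ frontier Ω', ‖nrm x‖ = 1) ∧
      ∀ G : EuclideanSpace ℝ (Fin m) → EuclideanSpace ℝ (Fin m),
        ContDiffOn ℝ 1 G (closure Ω') →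
        ∫ x in Ω', divg G x =
          ∫ x in frontier Ω', ⟪G x, nrm x⟫_ℝ ∂(μH[(m : ℝ) - 1])) :
    |(∫ x in Ω', (Real.sqrt (a ^ 2 + ‖gradient v x + F x‖ ^ 2) -
        Real.sqrt (a ^ 2 + ‖gradient w x + F x‖ ^ 2)))| ≤
      ∫ x in frontier Ω', |v x - w x| ∂(μH[(m : ℝ) - 1]) := by
  obtain ⟨nrm, hnrm, hdiv⟩ := hdivthm
  have hveq' : ∀ x ∈ Ω, divg (Nf a F v) x = 0 := hveq
  have hweq' : ∀ x ∈ Ω, divg (Nf a F w) x = 0 := hweq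
  have h1 := one_side Ω hopen F hF a ha v w hv hw hveq' Ω' hΩ'open hΩ'sub hΩ'cpt hσfin
    nrm hnrm hdiv
  have h2 := one_side Ω hopen F hF a ha w v hw hv hweq' Ω' hΩ'open hΩ'sub hΩ'cpt hσfin
    nrm hnrm hdiv
  have hBB : ∫ x in frontier Ω', |w x - v x| ∂(μH[(m : ℝ) - 1]) =
      ∫ x in frontier Ω', |v x - w x| ∂(μH[(m : ℝ) - 1]) := by
    simp only [abs_sub_comm]
  rw [hBB] at h2
  have hneg : ∫ x in Ω', (qf a F w x - qf a F v x) =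
      - ∫ x in Ω', (qf a F v x - qf a F w x) := by
    rw [← integral_neg]
    congr 1
    funext x
    ring
  rw [hneg] at h2
  show |∫ x in Ω', (qf a F v x - qf a F w x)| ≤ _
  rw [abs_le]
  constructor <;> linarith

end
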